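/- Let B be a symmetric n×n matrix with I + τB positive definite (τ > 0), let S₁, S₂ be linear subspaces of ℝⁿ, and for i = 1, 2 let Pᵢ = Π_{Sᵢ}(I + τAᵢ)^{-1}Π_{Sᵢ} where Aᵢ is symmetric with range(Aᵢ) ⊆ Sᵢ and Aᵢ ⪰ Π_{Sᵢ} B Π_{Sᵢ}. Let P = a₁P₁ + a₂P₂ with a₁, a₂ > 0, a₁ + a₂ = 1. Then P = Π_{S₁+S₂}(I + τA)^{-1}Π_{S₁+S₂} for some symmetric A with range(A) ⊆ S₁ + S₂ and A ⪰ Π_{S₁+S₂} B Π_{S₁+S₂}. -/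

import Mathlib

set_option maxHeartbeats 1000000

open Matrix

namespace Stmt4Aux

variable {n : ℕ}

local notation "Mat" => Matrix (Fin n) (Fin n) ℝ

lemma herm_of_symm {M : Mat} (h : Mᵀ = M) : M.IsHermitian := by
  have h2 : Mᴴ = Mᵀ := by ext i j; simp [conjTranspose_apply]
  rw [Matrix.IsHermitian, h2]; exact h

lemma symm_of_herm {M : Mat} (h : M.IsHermitian) : Mᵀ = M := by
  have h2 : Mᴴ = Mᵀ := by ext i j; simp [conjTranspose_apply]
  rw [← h2]; exact h

lemma dot_swap {M : Mat} (h : Mᵀ = M) (x y : Fin n → ℝ) :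
    x ⬝ᵥ M *ᵥ y = (M *ᵥ x) ⬝ᵥ y := by
  rw [dotProduct_mulVec, ← mulVec_transpose, h]

lemma psd_apply {M : Mat} (h : M.PosSemidef) (x : Fin n → ℝ) : 0 ≤ x ⬝ᵥ M *ᵥ x := by
  simpa using h.dotProduct_mulVec_nonneg x

lemma pd_apply {M : Mat} (h : M.PosDef) {x : Fin n → ℝ} (hx : x ≠ 0) :
    0 < x ⬝ᵥ M *ᵥ x := by
  simpa using h.dotProduct_mulVec_pos hx

lemma posSemidef_of {M : Mat} (hs : Mᵀ = M) (h : ∀ x, 0 ≤ x ⬝ᵥ M *ᵥ x) :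
    M.PosSemidef := .of_dotProduct_mulVec_nonneg (herm_of_symm hs) fun x => by simpa using h x

lemma posDef_of {M : Mat} (hs : Mᵀ = M) (h : ∀ x, x ≠ 0 → 0 < x ⬝ᵥ M *ᵥ x) :
    M.PosDef := .of_dotProduct_mulVec_pos (herm_of_symm hs) fun x hx => by simpa using h x hx

lemma dot_self_nonneg (x : Fin n → ℝ) : 0 ≤ x ⬝ᵥ x :=
  Finset.sum_nonneg fun i _ => mul_self_nonneg _

lemma dot_self_pos {x : Fin n → ℝ} (hx : x ≠ 0) : 0 < x ⬝ᵥ x :=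
  (dot_self_nonneg x).lt_of_ne fun h => hx ((dotProduct_self_eq_zero).1 h.symm)

lemma ext_mulVec {M N : Mat} (h : ∀ x, M *ᵥ x = N *ᵥ x) : M = N := by
  ext i j
  have h2 := congrFun (h (Pi.single j 1)) i
  rwa [mulVec_single_one, mulVec_single_one] at h2

lemma proj_absorb {P R : Mat} (hPi : P * P = P)
    (hr : LinearMap.range R.mulVecLin ≤ LinearMap.range P.mulVecLin) : P * R = R := by
  apply ext_mulVec
  intro x
  obtain ⟨z, hz⟩ := hr ⟨x, rfl⟩
  simp only [mulVecLin_apply] at hz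
  calc (P * R) *ᵥ x = P *ᵥ (R *ᵥ x) := (mulVec_mulVec _ _ _).symm
    _ = P *ᵥ (P *ᵥ z) := by rw [hz]
    _ = (P * P) *ᵥ z := mulVec_mulVec _ _ _
    _ = P *ᵥ z := by rw [hPi]
    _ = R *ᵥ x := hz

lemma commute_inv {M X : Mat} (hu : IsUnit X.det) (h : M * X = X * M) :
    M * X⁻¹ = X⁻¹ * M := by
  have h1 : X⁻¹ * M * X * X⁻¹ = X⁻¹ * X * M * X⁻¹ := by
    rw [Matrix.mul_assoc X⁻¹ M X, h, ← Matrix.mul_assoc X⁻¹ X M]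
  rw [Matrix.mul_assoc (X⁻¹ * M) X X⁻¹, Matrix.mul_nonsing_inv _ hu, Matrix.mul_one,
      Matrix.nonsing_inv_mul _ hu, Matrix.one_mul] at h1
  exact h1.symm

/-- the key variational inequality. -/
lemma key {D : Mat} (hD : D.PosDef) (u y : Fin n → ℝ) :
    2 * (u ⬝ᵥ y) - y ⬝ᵥ D *ᵥ y ≤ u ⬝ᵥ D⁻¹ *ᵥ u := by
  have hds : Dᵀ = D := symm_of_herm hD.1
  have hdet : IsUnit D.det := (Matrix.isUnit_iff_isUnit_det _).1 hD.isUnit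
  have hDu : D *ᵥ (D⁻¹ *ᵥ u) = u := by
    rw [mulVec_mulVec, Matrix.mul_nonsing_inv _ hdet, one_mulVec]
  have h0 : 0 ≤ (D⁻¹ *ᵥ u - y) ⬝ᵥ D *ᵥ (D⁻¹ *ᵥ u - y) := psd_apply hD.posSemidef _
  have h1 : (D⁻¹ *ᵥ u) ⬝ᵥ (D *ᵥ y) = u ⬝ᵥ y := by rw [dot_swap hds, hDu]
  have h2 : (D⁻¹ *ᵥ u) ⬝ᵥ u = u ⬝ᵥ D⁻¹ *ᵥ u := dotProduct_comm _ _
  have h3 : y ⬝ᵥ u = u ⬝ᵥ y := dotProduct_comm _ _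
  rw [mulVec_sub, hDu, dotProduct_sub, sub_dotProduct, sub_dotProduct, h1, h2, h3] at h0
  linarith

lemma compress_quad {Qi : Mat} (M : Mat) (hQis : Qiᵀ = Qi) (x : Fin n → ℝ) :
    x ⬝ᵥ (Qi * M * Qi) *ᵥ x = (Qi *ᵥ x) ⬝ᵥ M *ᵥ (Qi *ᵥ x) := by
  rw [← mulVec_mulVec, ← mulVec_mulVec, dot_swap hQis]

lemma quad_one_add (τ : ℝ) (M : Mat) (x : Fin n → ℝ) :
    x ⬝ᵥ ((1 : Mat) + τ • M) *ᵥ x = x ⬝ᵥ x + τ * (x ⬝ᵥ M *ᵥ x) := by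
  rw [add_mulVec, one_mulVec, dotProduct_add, smul_mulVec, dotProduct_smul, smul_eq_mul]

lemma quad_one_sub {Q : Mat} (hQs : Qᵀ = Q) (hQi : Q * Q = Q) (x : Fin n → ℝ) :
    x ⬝ᵥ ((1 : Mat) - Q) *ᵥ x = (x - Q *ᵥ x) ⬝ᵥ (x - Q *ᵥ x) := by
  have hQQ : (Q *ᵥ x) ⬝ᵥ (Q *ᵥ x) = x ⬝ᵥ Q *ᵥ x := by
    rw [← dot_swap hQs, mulVec_mulVec, hQi]
  have hxq : (Q *ᵥ x) ⬝ᵥ x = x ⬝ᵥ Q *ᵥ x := dotProduct_comm _ _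
  rw [sub_mulVec, one_mulVec, dotProduct_sub]
  rw [dotProduct_sub, sub_dotProduct, sub_dotProduct]
  rw [hQQ, hxq]
  ring

lemma norm_proj_le {Q : Mat} (hQs : Qᵀ = Q) (hQi : Q * Q = Q) (x : Fin n → ℝ) :
    (Q *ᵥ x) ⬝ᵥ (Q *ᵥ x) ≤ x ⬝ᵥ x := by
  have h := dot_self_nonneg (x - Q *ᵥ x)
  rw [← quad_one_sub hQs hQi] at h
  have hQQ : (Q *ᵥ x) ⬝ᵥ (Q *ᵥ x) = x ⬝ᵥ Q *ᵥ x := by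
    rw [← dot_swap hQs, mulVec_mulVec, hQi]
  rw [sub_mulVec, one_mulVec, dotProduct_sub] at h
  linarith [hQQ]

lemma quad_B_le {B Qi Ai : Mat} (hQis : Qiᵀ = Qi)
    (hAi : (Ai - Qi * B * Qi).PosSemidef)
    {y : Fin n → ℝ} (hy : Qi *ᵥ y = y) : y ⬝ᵥ B *ᵥ y ≤ y ⬝ᵥ Ai *ᵥ y := by
  have h := psd_apply hAi y
  rw [sub_mulVec, dotProduct_sub, compress_quad B hQis, hy] at h
  linarith

/-- positive definiteness of `1 + τ • Aᵢ`. -/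
lemma Ni_posdef {τ : ℝ} (hτ : 0 < τ) {B Qi Ai : Mat}
    (hC : ((1 : Mat) + τ • B).PosDef)
    (hQis : Qiᵀ = Qi) (hQii : Qi * Qi = Qi)
    (hAQ : Qi * Ai = Ai) (hQA : Ai * Qi = Ai) (hAis : Aiᵀ = Ai)
    (hAi : (Ai - Qi * B * Qi).PosSemidef) :
    ((1 : Mat) + τ • Ai).PosDef := by
  apply posDef_of
  · rw [transpose_add, transpose_one, transpose_smul, hAis]
  · intro x hx
    set u := Qi *ᵥ x with hu
    have hAiQform : Qi * Ai * Qi = Ai := by rw [hAQ, hQA]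
    have h1 : x ⬝ᵥ Ai *ᵥ x = u ⬝ᵥ Ai *ᵥ u := by
      conv_lhs => rw [← hAiQform]
      rw [compress_quad Ai hQis]
    have hu_fix : Qi *ᵥ u = u := by rw [hu, mulVec_mulVec, hQii]
    rw [quad_one_add, h1]
    have hAB : u ⬝ᵥ B *ᵥ u ≤ u ⬝ᵥ Ai *ᵥ u := quad_B_le hQis hAi hu_fix
    by_cases hu0 : u = 0
    · rw [hu0]
      simp only [mulVec_zero, dotProduct_zero, mul_zero, add_zero]
      exact dot_self_pos hx
    · have hCu := pd_apply hC hu0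
      rw [quad_one_add] at hCu
      have hle := norm_proj_le hQis hQii x
      rw [← hu] at hle
      nlinarith

/-- claim 2 : the compressed-inverse quadratic form is dominated by that of `D⁻¹`. -/
lemma claim2 {τ : ℝ} (hτ : 0 < τ) {B Qi Ai Q D : Mat}
    (hQis : Qiᵀ = Qi) (hQii : Qi * Qi = Qi)
    (hAQ : Qi * Ai = Ai) (hQA : Ai * Qi = Ai)
    (hAi : (Ai - Qi * B * Qi).PosSemidef)
    (hQQi : Q * Qi = Qi) (hQs : Qᵀ = Q)
    (hD : D.PosDef)
    (hDy : ∀ y, Q *ᵥ y = y → y ⬝ᵥ D *ᵥ y = y ⬝ᵥ y + τ * (y ⬝ᵥ B *ᵥ y))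
    (hNi : ((1 : Mat) + τ • Ai).PosDef)
    (w : Fin n → ℝ) :
    w ⬝ᵥ (Qi * ((1 : Mat) + τ • Ai)⁻¹ * Qi) *ᵥ w ≤ (Q *ᵥ w) ⬝ᵥ D⁻¹ *ᵥ (Q *ᵥ w) := by
  set Ni := (1 : Mat) + τ • Ai with hNidef
  have hNdet : IsUnit Ni.det := (Matrix.isUnit_iff_isUnit_det _).1 hNi.isUnit
  have hcomm : Qi * Ni = Ni * Qi := by
    rw [hNidef, Matrix.mul_add, Matrix.add_mul, Matrix.mul_one, Matrix.one_mul,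
        Matrix.mul_smul, Matrix.smul_mul, hAQ, hQA]
  have hcomminv : Qi * Ni⁻¹ = Ni⁻¹ * Qi := commute_inv hNdet hcomm
  set u := Qi *ᵥ w with hu
  set y := Ni⁻¹ *ᵥ u with hy
  have hNy : Ni *ᵥ y = u := by
    rw [hy, mulVec_mulVec, Matrix.mul_nonsing_inv _ hNdet, one_mulVec]
  have hQiu : Qi *ᵥ u = u := by rw [hu, mulVec_mulVec, hQii]
  have hQiy : Qi *ᵥ y = y := by
    rw [hy, mulVec_mulVec, hcomminv, ← mulVec_mulVec, hQiu]
  have hQy : Q *ᵥ y = y := by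
    conv_lhs => rw [← hQiy]
    rw [mulVec_mulVec, hQQi, hQiy]
  have hLHS : w ⬝ᵥ (Qi * Ni⁻¹ * Qi) *ᵥ w = u ⬝ᵥ Ni⁻¹ *ᵥ u := by
    rw [compress_quad _ hQis]
  have huy : u ⬝ᵥ Ni⁻¹ *ᵥ u = u ⬝ᵥ y := by rw [hy]
  have hyNy : y ⬝ᵥ Ni *ᵥ y = u ⬝ᵥ y := by rw [hNy]; exact dotProduct_comm _ _
  have hBy : y ⬝ᵥ B *ᵥ y ≤ y ⬝ᵥ Ai *ᵥ y := quad_B_le hQis hAi hQiy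
  have hNiDy : y ⬝ᵥ D *ᵥ y ≤ y ⬝ᵥ Ni *ᵥ y := by
    rw [hDy y hQy, hNidef, quad_one_add]
    nlinarith
  have huy2 : u ⬝ᵥ y = (Q *ᵥ w) ⬝ᵥ y := by
    rw [hu, ← dot_swap hQis w y, hQiy, ← dot_swap hQs w y, hQy]
  have hkey := key hD (Q *ᵥ w) y
  rw [hLHS, huy]
  rw [hyNy] at hNiDy
  rw [← huy2] at hkey
  linarith

end Stmt4Aux

open Stmt4Aux

/-- convex combination of two compressed inverses is again a compressed inverse
on the sum of the subspaces (r = 2 case of Proposition 2.8). Here `Q₁, Q₂, Q` are the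
orthogonal projections onto `S₁`, `S₂` and `S₁ + S₂` respectively. -/
theorem stmt_4 {n : ℕ} (τ : ℝ) (hτ : 0 < τ)
    (B : Matrix (Fin n) (Fin n) ℝ) (hBsymm : B.IsSymm)
    (hpd : ((1 : Matrix (Fin n) (Fin n) ℝ) + τ • B).PosDef)
    (S₁ S₂ : Submodule ℝ (Fin n → ℝ))
    (Q₁ Q₂ Q A₁ A₂ : Matrix (Fin n) (Fin n) ℝ)
    (hQ₁s : Q₁.IsSymm) (hQ₁i : Q₁ * Q₁ = Q₁) (hQ₁r : LinearMap.range Q₁.mulVecLin = S₁)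
    (hQ₂s : Q₂.IsSymm) (hQ₂i : Q₂ * Q₂ = Q₂) (hQ₂r : LinearMap.range Q₂.mulVecLin = S₂)
    (hQs : Q.IsSymm) (hQi : Q * Q = Q) (hQr : LinearMap.range Q.mulVecLin = S₁ ⊔ S₂)
    (hA₁s : A₁.IsSymm) (hA₁r : LinearMap.range A₁.mulVecLin ≤ S₁)
    (hA₁ : (A₁ - Q₁ * B * Q₁).PosSemidef)
    (hA₂s : A₂.IsSymm) (hA₂r : LinearMap.range A₂.mulVecLin ≤ S₂)
    (hA₂ : (A₂ - Q₂ * B * Q₂).PosSemidef)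
    (a₁ a₂ : ℝ) (ha₁ : 0 < a₁) (ha₂ : 0 < a₂) (hsum : a₁ + a₂ = 1) :
    ∃ A : Matrix (Fin n) (Fin n) ℝ, A.IsSymm ∧
      LinearMap.range A.mulVecLin ≤ S₁ ⊔ S₂ ∧
      (A - Q * B * Q).PosSemidef ∧
      a₁ • (Q₁ * ((1 : Matrix (Fin n) (Fin n) ℝ) + τ • A₁)⁻¹ * Q₁)
        + a₂ • (Q₂ * ((1 : Matrix (Fin n) (Fin n) ℝ) + τ • A₂)⁻¹ * Q₂)
        = Q * ((1 : Matrix (Fin n) (Fin n) ℝ) + τ • A)⁻¹ * Q := by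
  have hQs' : Qᵀ = Q := hQs
  have hQ₁s' : Q₁ᵀ = Q₁ := hQ₁s
  have hQ₂s' : Q₂ᵀ = Q₂ := hQ₂s
  have hA₁s' : A₁ᵀ = A₁ := hA₁s
  have hA₂s' : A₂ᵀ = A₂ := hA₂s
  have hBs' : Bᵀ = B := hBsymm
  -- absorption facts
  have hQQ₁ : Q * Q₁ = Q₁ := proj_absorb hQi (by rw [hQ₁r, hQr]; exact le_sup_left)
  have hQQ₂ : Q * Q₂ = Q₂ := proj_absorb hQi (by rw [hQ₂r, hQr]; exact le_sup_right)
  have hQ₁Q : Q₁ * Q = Q₁ := by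
    have h := congrArg Matrix.transpose hQQ₁
    rwa [transpose_mul, hQ₁s', hQs'] at h
  have hQ₂Q : Q₂ * Q = Q₂ := by
    have h := congrArg Matrix.transpose hQQ₂
    rwa [transpose_mul, hQ₂s', hQs'] at h
  have hQ₁A₁ : Q₁ * A₁ = A₁ := proj_absorb hQ₁i (by rw [hQ₁r]; exact hA₁r)
  have hQ₂A₂ : Q₂ * A₂ = A₂ := proj_absorb hQ₂i (by rw [hQ₂r]; exact hA₂r)
  have hA₁Q₁ : A₁ * Q₁ = A₁ := by
    have h := congrArg Matrix.transpose hQ₁A₁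
    rwa [transpose_mul, hQ₁s', hA₁s'] at h
  have hA₂Q₂ : A₂ * Q₂ = A₂ := by
    have h := congrArg Matrix.transpose hQ₂A₂
    rwa [transpose_mul, hQ₂s', hA₂s'] at h
  -- positive definiteness of the Nᵢ
  have hN₁pd : ((1 : Matrix (Fin n) (Fin n) ℝ) + τ • A₁).PosDef :=
    Ni_posdef hτ hpd hQ₁s' hQ₁i hQ₁A₁ hA₁Q₁ hA₁s' hA₁
  have hN₂pd : ((1 : Matrix (Fin n) (Fin n) ℝ) + τ • A₂).PosDef :=
    Ni_posdef hτ hpd hQ₂s' hQ₂i hQ₂A₂ hA₂Q₂ hA₂s' hA₂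
  obtain ⟨N₁, hN₁def⟩ : ∃ M, M = (1 : Matrix (Fin n) (Fin n) ℝ) + τ • A₁ := ⟨_, rfl⟩
  obtain ⟨N₂, hN₂def⟩ : ∃ M, M = (1 : Matrix (Fin n) (Fin n) ℝ) + τ • A₂ := ⟨_, rfl⟩
  rw [← hN₁def] at hN₁pd
  rw [← hN₂def] at hN₂pd
  rw [← hN₁def, ← hN₂def]
  have hN₁det : IsUnit N₁.det := (Matrix.isUnit_iff_isUnit_det _).1 hN₁pd.isUnit
  have hN₂det : IsUnit N₂.det := (Matrix.isUnit_iff_isUnit_det _).1 hN₂pd.isUnit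
  have hN₁s : N₁ᵀ = N₁ := by
    rw [hN₁def, transpose_add, transpose_one, transpose_smul, hA₁s']
  have hN₂s : N₂ᵀ = N₂ := by
    rw [hN₂def, transpose_add, transpose_one, transpose_smul, hA₂s']
  have hN₁invs : (N₁⁻¹)ᵀ = N₁⁻¹ := by rw [Matrix.transpose_nonsing_inv, hN₁s]
  have hN₂invs : (N₂⁻¹)ᵀ = N₂⁻¹ := by rw [Matrix.transpose_nonsing_inv, hN₂s]
  obtain ⟨P₁, hP₁def⟩ : ∃ M, M = Q₁ * N₁⁻¹ * Q₁ := ⟨_, rfl⟩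
  obtain ⟨P₂, hP₂def⟩ : ∃ M, M = Q₂ * N₂⁻¹ * Q₂ := ⟨_, rfl⟩
  rw [← hP₁def, ← hP₂def]
  obtain ⟨P, hPdef⟩ : ∃ M, M = a₁ • P₁ + a₂ • P₂ := ⟨_, rfl⟩
  obtain ⟨N, hNdef⟩ : ∃ M, M = P + ((1 : Matrix (Fin n) (Fin n) ℝ) - Q) := ⟨_, rfl⟩
  have hP₁s : P₁ᵀ = P₁ := by
    rw [hP₁def, transpose_mul, transpose_mul, hQ₁s', hN₁invs, Matrix.mul_assoc]
  have hP₂s : P₂ᵀ = P₂ := by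
    rw [hP₂def, transpose_mul, transpose_mul, hQ₂s', hN₂invs, Matrix.mul_assoc]
  have hPs : Pᵀ = P := by
    rw [hPdef, transpose_add, transpose_smul, transpose_smul, hP₁s, hP₂s]
  have hNs : Nᵀ = N := by
    rw [hNdef, transpose_add, transpose_sub, transpose_one, hQs', hPs]
  -- quadratic forms
  have hP₁quad : ∀ x, x ⬝ᵥ P₁ *ᵥ x = (Q₁ *ᵥ x) ⬝ᵥ N₁⁻¹ *ᵥ (Q₁ *ᵥ x) := fun x => by
    rw [hP₁def, compress_quad _ hQ₁s']
  have hP₂quad : ∀ x, x ⬝ᵥ P₂ *ᵥ x = (Q₂ *ᵥ x) ⬝ᵥ N₂⁻¹ *ᵥ (Q₂ *ᵥ x) := fun x => by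
    rw [hP₂def, compress_quad _ hQ₂s']
  have hNquad : ∀ x, x ⬝ᵥ N *ᵥ x
      = a₁ * (x ⬝ᵥ P₁ *ᵥ x) + a₂ * (x ⬝ᵥ P₂ *ᵥ x)
        + (x - Q *ᵥ x) ⬝ᵥ (x - Q *ᵥ x) := fun x => by
    rw [hNdef, hPdef, add_mulVec, add_mulVec, smul_mulVec, smul_mulVec,
        dotProduct_add, dotProduct_add, dotProduct_smul, dotProduct_smul,
        quad_one_sub hQs' hQi, smul_eq_mul, smul_eq_mul]
  -- positive definiteness of N
  have hNpd : N.PosDef := by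
    apply posDef_of hNs
    intro x hx
    have h1 : 0 ≤ x ⬝ᵥ P₁ *ᵥ x := by
      rw [hP₁quad]; exact psd_apply hN₁pd.inv.posSemidef _
    have h2 : 0 ≤ x ⬝ᵥ P₂ *ᵥ x := by
      rw [hP₂quad]; exact psd_apply hN₂pd.inv.posSemidef _
    have h3 : 0 ≤ (x - Q *ᵥ x) ⬝ᵥ (x - Q *ᵥ x) := dot_self_nonneg _
    rw [hNquad]
    by_cases hu1 : Q₁ *ᵥ x = 0
    · by_cases hu2 : Q₂ *ᵥ x = 0
      · have hw : x - Q *ᵥ x ≠ 0 := by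
          intro hw0
          have hxQ : Q *ᵥ x = x := by
            have h4 := sub_eq_zero.1 hw0; exact h4.symm
          have hx_mem : x ∈ LinearMap.range Q.mulVecLin :=
            ⟨x, by rw [mulVecLin_apply, hxQ]⟩
          rw [hQr] at hx_mem
          obtain ⟨y₁, hy₁, y₂, hy₂, hsum'⟩ := Submodule.mem_sup.1 hx_mem
          rw [← hQ₁r] at hy₁
          rw [← hQ₂r] at hy₂
          obtain ⟨z₁, hz₁⟩ := hy₁
          obtain ⟨z₂, hz₂⟩ := hy₂
          rw [mulVecLin_apply] at hz₁ hz₂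
          have hd1 : x ⬝ᵥ y₁ = 0 := by
            rw [← hz₁, dot_swap hQ₁s', hu1, zero_dotProduct]
          have hd2 : x ⬝ᵥ y₂ = 0 := by
            rw [← hz₂, dot_swap hQ₂s', hu2, zero_dotProduct]
          have hxx : x ⬝ᵥ x = 0 := by
            nth_rewrite 2 [← hsum']
            rw [dotProduct_add, hd1, hd2, add_zero]
          exact hx (dotProduct_self_eq_zero.1 hxx)
        have h5 := dot_self_pos hw
        nlinarith
      · have h5 := pd_apply hN₂pd.inv hu2
        rw [← hP₂quad] at h5
        nlinarith
    · have h5 := pd_apply hN₁pd.inv hu1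
      rw [← hP₁quad] at h5
      nlinarith
  have hNdet : IsUnit N.det := (Matrix.isUnit_iff_isUnit_det _).1 hNpd.isUnit
  -- the comparison matrix D
  obtain ⟨D, hDdef⟩ : ∃ M, M = (1 : Matrix (Fin n) (Fin n) ℝ) - Q
      + Q * ((1 : Matrix (Fin n) (Fin n) ℝ) + τ • B) * Q := ⟨_, rfl⟩
  have hCs : ((1 : Matrix (Fin n) (Fin n) ℝ) + τ • B)ᵀ = 1 + τ • B := by
    rw [transpose_add, transpose_one, transpose_smul, hBs']
  have hDs : Dᵀ = D := by
    rw [hDdef, transpose_add, transpose_sub, transpose_one, hQs',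
        transpose_mul, transpose_mul, hQs', hCs, Matrix.mul_assoc]
  have hDquad : ∀ x, x ⬝ᵥ D *ᵥ x = (x - Q *ᵥ x) ⬝ᵥ (x - Q *ᵥ x)
      + (Q *ᵥ x) ⬝ᵥ ((1 : Matrix (Fin n) (Fin n) ℝ) + τ • B) *ᵥ (Q *ᵥ x) := fun x => by
    rw [hDdef, add_mulVec, dotProduct_add, quad_one_sub hQs' hQi, compress_quad _ hQs']
  have hDy : ∀ y, Q *ᵥ y = y → y ⬝ᵥ D *ᵥ y = y ⬝ᵥ y + τ * (y ⬝ᵥ B *ᵥ y) := by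
    intro y hy
    rw [hDquad, hy, sub_self, zero_dotProduct, zero_add, quad_one_add]
  have hDpd : D.PosDef := by
    apply posDef_of hDs
    intro x hx
    rw [hDquad]
    by_cases hq : Q *ᵥ x = 0
    · rw [hq, sub_zero]
      simp only [mulVec_zero, dotProduct_zero, zero_dotProduct, add_zero]
      exact dot_self_pos hx
    · have h5 := pd_apply hpd hq
      have h6 := dot_self_nonneg (x - Q *ᵥ x)
      linarith
  have hDdet : IsUnit D.det := (Matrix.isUnit_iff_isUnit_det _).1 hDpd.isUnit
  -- commutation facts for D
  have hQCQ : Q * (Q * (1 + τ • B) * Q) = Q * (1 + τ • B) * Q := by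
    rw [← Matrix.mul_assoc, ← Matrix.mul_assoc, hQi]
  have hQCQ' : Q * (1 + τ • B) * Q * Q = Q * (1 + τ • B) * Q := by
    rw [Matrix.mul_assoc (Q * (1 + τ • B)) Q Q, hQi]
  have hQD : Q * D = D * Q := by
    rw [hDdef, Matrix.mul_add, Matrix.add_mul, Matrix.mul_sub, Matrix.sub_mul,
        Matrix.mul_one, Matrix.one_mul, hQi, hQCQ, hQCQ']
  have hDQ : D * Q = Q * (1 + τ • B) * Q := by
    rw [hDdef, Matrix.add_mul, Matrix.sub_mul, Matrix.one_mul, hQi, sub_self, zero_add, hQCQ']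
  have hD1Q : D * (1 - Q) = 1 - Q := by
    rw [Matrix.mul_sub, Matrix.mul_one, hDQ, hDdef, add_sub_cancel_right]
  have hQDi : Q * D⁻¹ = D⁻¹ * Q := commute_inv hDdet hQD
  have hDinv1Q : D⁻¹ * (1 - Q) = 1 - Q := by
    calc D⁻¹ * (1 - Q) = D⁻¹ * (D * (1 - Q)) := by rw [hD1Q]
      _ = D⁻¹ * D * (1 - Q) := (Matrix.mul_assoc _ _ _).symm
      _ = 1 - Q := by rw [Matrix.nonsing_inv_mul _ hDdet, Matrix.one_mul]
  have hDinvdecomp : D⁻¹ = Q * D⁻¹ * Q + (1 - Q) := by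
    have h1 : Q * D⁻¹ * Q = D⁻¹ * Q := by
      rw [hQDi, Matrix.mul_assoc, hQi]
    rw [h1, ← hDinv1Q, ← Matrix.mul_add]
    have h2 : Q + ((1 : Matrix (Fin n) (Fin n) ℝ) - Q) = 1 := by abel
    rw [h2, Matrix.mul_one]
  -- N ⪯ D⁻¹
  have hND : ∀ w, w ⬝ᵥ N *ᵥ w ≤ w ⬝ᵥ D⁻¹ *ᵥ w := by
    intro w
    have hc1 := claim2 hτ hQ₁s' hQ₁i hQ₁A₁ hA₁Q₁ hA₁ hQQ₁ hQs' hDpd hDy (hN₁def ▸ hN₁pd) w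
    have hc2 := claim2 hτ hQ₂s' hQ₂i hQ₂A₂ hA₂Q₂ hA₂ hQQ₂ hQs' hDpd hDy (hN₂def ▸ hN₂pd) w
    rw [← hN₁def, ← hP₁def] at hc1
    rw [← hN₂def, ← hP₂def] at hc2
    have hdec : w ⬝ᵥ D⁻¹ *ᵥ w
        = (Q *ᵥ w) ⬝ᵥ D⁻¹ *ᵥ (Q *ᵥ w) + (w - Q *ᵥ w) ⬝ᵥ (w - Q *ᵥ w) := by
      conv_lhs => rw [hDinvdecomp]
      rw [add_mulVec, dotProduct_add, compress_quad _ hQs', quad_one_sub hQs' hQi]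
    rw [hNquad w, hdec]
    have hR : a₁ * ((Q *ᵥ w) ⬝ᵥ D⁻¹ *ᵥ (Q *ᵥ w)) + a₂ * ((Q *ᵥ w) ⬝ᵥ D⁻¹ *ᵥ (Q *ᵥ w))
        = (Q *ᵥ w) ⬝ᵥ D⁻¹ *ᵥ (Q *ᵥ w) := by rw [← add_mul, hsum, one_mul]
    linarith [mul_le_mul_of_nonneg_left hc1 ha₁.le, mul_le_mul_of_nonneg_left hc2 ha₂.le]
  -- D ⪯ N⁻¹
  have hNinvD : ∀ x, x ⬝ᵥ D *ᵥ x ≤ x ⬝ᵥ N⁻¹ *ᵥ x := by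
    intro x
    have hkey := key hNpd x (D *ᵥ x)
    have h1 : D⁻¹ *ᵥ (D *ᵥ x) = x := by
      rw [mulVec_mulVec, Matrix.nonsing_inv_mul _ hDdet, one_mulVec]
    have h2 := hND (D *ᵥ x)
    have h3 : (D *ᵥ x) ⬝ᵥ D⁻¹ *ᵥ (D *ᵥ x) = x ⬝ᵥ D *ᵥ x := by
      rw [h1]; exact dotProduct_comm _ _
    have h4 : x ⬝ᵥ D *ᵥ x = (D *ᵥ x) ⬝ᵥ x := dotProduct_comm _ _
    have h5 : x ⬝ᵥ (D *ᵥ x) = x ⬝ᵥ D *ᵥ x := rfl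
    linarith
  -- commutation facts for N
  have hQP₁ : Q * P₁ = P₁ := by
    rw [hP₁def, ← Matrix.mul_assoc, ← Matrix.mul_assoc, hQQ₁]
  have hQP₂ : Q * P₂ = P₂ := by
    rw [hP₂def, ← Matrix.mul_assoc, ← Matrix.mul_assoc, hQQ₂]
  have hP₁Q : P₁ * Q = P₁ := by
    rw [hP₁def, Matrix.mul_assoc (Q₁ * N₁⁻¹) Q₁ Q, hQ₁Q]
  have hP₂Q : P₂ * Q = P₂ := by
    rw [hP₂def, Matrix.mul_assoc (Q₂ * N₂⁻¹) Q₂ Q, hQ₂Q]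
  have hQP : Q * P = P := by
    rw [hPdef, Matrix.mul_add, Matrix.mul_smul, Matrix.mul_smul, hQP₁, hQP₂]
  have hPQ : P * Q = P := by
    rw [hPdef, Matrix.add_mul, Matrix.smul_mul, Matrix.smul_mul, hP₁Q, hP₂Q]
  have hQN : Q * N = P := by
    rw [hNdef, Matrix.mul_add, hQP, Matrix.mul_sub, Matrix.mul_one, hQi, sub_self, add_zero]
  have hNQ : N * Q = P := by
    rw [hNdef, Matrix.add_mul, hPQ, Matrix.sub_mul, Matrix.one_mul, hQi, sub_self, add_zero]
  have hQNcomm : Q * N = N * Q := by rw [hQN, hNQ]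
  have hQNi : Q * N⁻¹ = N⁻¹ * Q := commute_inv hNdet hQNcomm
  have hN1Q : N * (1 - Q) = 1 - Q := by
    rw [Matrix.mul_sub, Matrix.mul_one, hNQ, hNdef]
    abel
  have hNinv1Q : N⁻¹ * (1 - Q) = 1 - Q := by
    calc N⁻¹ * (1 - Q) = N⁻¹ * (N * (1 - Q)) := by rw [hN1Q]
      _ = N⁻¹ * N * (1 - Q) := (Matrix.mul_assoc _ _ _).symm
      _ = 1 - Q := by rw [Matrix.nonsing_inv_mul _ hNdet, Matrix.one_mul]
  have hNinvQ : N⁻¹ * Q = N⁻¹ - 1 + Q := by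
    rw [Matrix.mul_sub, Matrix.mul_one] at hNinv1Q
    have h3 : N⁻¹ * Q = N⁻¹ - (1 - Q) := by rw [← hNinv1Q]; abel
    rw [h3]; abel
  have hNinvs : (N⁻¹)ᵀ = N⁻¹ := by rw [Matrix.transpose_nonsing_inv, hNs]
  -- the matrix A
  have h1τA : (1 : Matrix (Fin n) (Fin n) ℝ) + τ • (τ⁻¹ • (N⁻¹ - 1)) = N⁻¹ := by
    rw [smul_smul, mul_inv_cancel₀ hτ.ne', one_smul]
    abel
  have hQAA : Q * (τ⁻¹ • (N⁻¹ - 1)) = τ⁻¹ • (N⁻¹ - 1) := by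
    rw [Matrix.mul_smul, Matrix.mul_sub, Matrix.mul_one, hQNi, hNinvQ]
    congr 1
    abel
  refine ⟨τ⁻¹ • (N⁻¹ - 1), ?_, ?_, ?_, ?_⟩
  · show (τ⁻¹ • (N⁻¹ - 1))ᵀ = τ⁻¹ • (N⁻¹ - 1)
    rw [transpose_smul, transpose_sub, transpose_one, hNinvs]
  · rintro v ⟨x, rfl⟩
    rw [← hQr]
    refine ⟨(τ⁻¹ • (N⁻¹ - 1)) *ᵥ x, ?_⟩
    rw [mulVecLin_apply, mulVecLin_apply, mulVec_mulVec, hQAA]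
  · have hQCQexp : Q * (1 + τ • B) * Q = Q + τ • (Q * B * Q) := by
      rw [Matrix.mul_add, Matrix.mul_one, Matrix.add_mul, hQi, Matrix.mul_smul, Matrix.smul_mul]
    have hAeq : τ⁻¹ • (N⁻¹ - 1) - Q * B * Q = τ⁻¹ • (N⁻¹ - D) := by
      rw [hDdef, hQCQexp]
      have h4 : N⁻¹ - ((1 : Matrix (Fin n) (Fin n) ℝ) - Q + (Q + τ • (Q * B * Q)))
          = N⁻¹ - 1 - τ • (Q * B * Q) := by abel
      have h5 : τ⁻¹ • (τ • (Q * B * Q)) = Q * B * Q := by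
        rw [smul_smul, inv_mul_cancel₀ hτ.ne', one_smul]
      rw [h4, smul_sub τ⁻¹ (N⁻¹ - 1) (τ • (Q * B * Q)), h5]
    rw [hAeq]
    apply posSemidef_of
    · rw [transpose_smul, transpose_sub, hNinvs, hDs]
    · intro x
      rw [smul_mulVec, dotProduct_smul, smul_eq_mul, sub_mulVec, dotProduct_sub]
      have h5 := hNinvD x
      have h6 : (0:ℝ) ≤ τ⁻¹ := le_of_lt (inv_pos.2 hτ)
      nlinarith
  · rw [h1τA, Matrix.nonsing_inv_nonsing_inv _ hNdet, hQN, hPQ]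
    exact hPdef.symm
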